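/- Under the simultaneous Doeblin condition, the distinguished state z minimizes the optimal value function: J*(λ,z) = min_{y ∈ S} J*(λ,y). -/

import Mathlib

open scoped Classical BigOperators ENNReal

namespace RiskSensitive

/-- A (history-dependent, randomized) policy for a finite MDP: given the past
(chronological list of (state, action) pairs) and the current state, it assigns a
probability weight to each action, concentrated on the admissible actions. -/
structure Policy (S A : Type*) [Fintype S] [Fintype A] (Adm : S → Finset A) where
  toFun : List (S × A) → S → A → ℝ
  nonneg : ∀ h s a, 0 ≤ toFun h s a
  sum_one : ∀ h s, ∑ a, toFun h s a = 1
  supp : ∀ h s a, a ∉ Adm s → toFun h s a = 0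

variable {S A : Type*} [Fintype S] [Fintype A]
variable (Adm : S → Finset A) (p : S → A → S → ℝ) (C : S → A → ℝ) (lam : ℝ)

/-- Probability of a finite trajectory (list of (action, next-state) pairs), given the
history so far and the current state. -/
noncomputable def pathProbAux (π : Policy S A Adm) :
    List (S × A) → S → List (A × S) → ℝ
  | _, _, [] => 1
  | hist, x, (a, y) :: rest =>
      π.toFun hist x a * p x a y * pathProbAux π (hist ++ [(x, a)]) y rest

/-- `pathProb π x l` is `P_x^π[A_0 = a_0, X_1 = y_1, …]` for `l = [(a_0,y_1),…]`. -/
noncomputable def pathProb (π : Policy S A Adm) (x : S) (l : List (A × S)) : ℝ :=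
  pathProbAux Adm p π [] x l

/-- Probability of a cylinder event depending on the first `n` (action, next-state) pairs. -/
noncomputable def cylProb (π : Policy S A Adm) (x : S) (n : ℕ)
    (E : (Fin n → A × S) → Prop) : ℝ :=
  ∑ v : Fin n → A × S, if E v then pathProb Adm p π x (List.ofFn v) else 0

/-- The state `X_t` along the trajectory encoded by `l`, starting from `x`. -/
def stateAt (x : S) (l : List (A × S)) (t : ℕ) : S :=
  (l.take t).foldl (fun _ q => q.2) x

/-- The final state of the finite trajectory `l` started at `x`. -/
def lastState (x : S) (l : List (A × S)) : S :=
  l.foldl (fun _ q => q.2) x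

/-- `Σ_t w(X_t, A_t)` along the finite trajectory `l` started at `x`. -/
def costSum (w : S → A → ℝ) : S → List (A × S) → ℝ
  | _, [] => 0
  | x, (a, y) :: rest => w x a + costSum w y rest

/-- `J_n(λ,π,x) = (1/λ) log E_x^π[exp(λ Σ_{t<n} C(X_t,A_t))]`. -/
noncomputable def Jn (π : Policy S A Adm) (x : S) (n : ℕ) : ℝ :=
  (1 / lam) * Real.log (∑ v : Fin n → A × S,
    pathProb Adm p π x (List.ofFn v) * Real.exp (lam * costSum C x (List.ofFn v)))

/-- The risk-sensitive average cost `J(λ,π,x) = limsup_n J_n(λ,π,x)/n`. -/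
noncomputable def Javg (π : Policy S A Adm) (x : S) : ℝ :=
  Filter.limsup (fun n : ℕ => Jn Adm p C lam π x n / n) Filter.atTop

/-- Optimal risk-sensitive average cost `J*(λ,x)`. -/
noncomputable def Jopt (x : S) : ℝ :=
  ⨅ π : Policy S A Adm, Javg Adm p C lam π x

/-- `π` is `ε`-optimal at `x`. -/
def EpsOptimalAt (π : Policy S A Adm) (x : S) (ε : ℝ) : Prop :=
  Javg Adm p C lam π x ≤ Jopt Adm p C lam x + ε

/-- `FirstExit Q v` : the trajectory `v` leaves `{Q}` for the first time exactly at its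
last step, i.e. the exit time of `Q` equals `n`. -/
def FirstExit (Q : S → Prop) {n : ℕ} (v : Fin n → A × S) : Prop :=
  0 < n ∧ (∀ t : Fin n, (t : ℕ) + 1 < n → Q (v t).2) ∧
    ∀ t : Fin n, (t : ℕ) + 1 = n → ¬ Q (v t).2

/-- `E_x^π[ exp(Σ_{t<τ} w(X_t,A_t)) ]` where `τ = min{n ≥ 1 : ¬ Q (X_n)}` is the first
exit time from `Q` (the contribution of `[τ = ∞]` is null when `τ < ∞` a.s.). -/
noncomputable def EexitExp (π : Policy S A Adm) (x : S) (Q : S → Prop)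
    (w : S → A → ℝ) : ℝ≥0∞ :=
  ∑' n : ℕ, ∑ v : Fin n → A × S,
    if FirstExit Q v then
      ENNReal.ofReal (pathProb Adm p π x (List.ofFn v) *
        Real.exp (costSum w x (List.ofFn v)))
    else 0

/-- `E_x^π[ exp(Σ_{t<T} w(X_t,A_t)) ]` with `T` the first positive arrival time to `z`. -/
noncomputable def EhitExp (π : Policy S A Adm) (x z : S) (w : S → A → ℝ) : ℝ≥0∞ :=
  EexitExp Adm p π x (fun y => y ≠ z) w

/-- `E_x^π[T]`, the expected first positive arrival time to `z`, computed as
`Σ_{n≥0} P_x^π[T > n]`. -/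
noncomputable def ExpT (π : Policy S A Adm) (x z : S) : ℝ≥0∞ :=
  ∑' n : ℕ, ENNReal.ofReal
    (cylProb Adm p π x n (fun v => ∀ t : Fin n, (v t).2 ≠ z))

/-- `P_x^π[T > n]`, the probability that `z` is not visited during the first `n` steps. -/
noncomputable def survProb (π : Policy S A Adm) (x z : S) (n : ℕ) : ℝ :=
  cylProb Adm p π x n (fun v => ∀ t : Fin n, (v t).2 ≠ z)

/-- The stationary policy induced by a choice function `f ∈ 𝔽`. -/
noncomputable def stationary (f : S → A) (hf : ∀ s, f s ∈ Adm s) : Policy S A Adm where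
  toFun := fun _ s a => if a = f s then 1 else 0
  nonneg := by intro h s a; (try dsimp only); split <;> norm_num
  sum_one := by intro h s; simp
  supp := by
    intro h s a ha
    try dsimp only
    rw [if_neg]
    intro hEq
    exact ha (hEq ▸ hf s)

/-- The simultaneous Doeblin condition: `E_x^f[T] ≤ M` for every state `x` and every
stationary policy `f`, where `T` is the first positive arrival time to `z`. -/
def Doeblin (z : S) (M : ℝ) : Prop :=
  0 < M ∧ ∀ (x : S) (f : S → A) (hf : ∀ s, f s ∈ Adm s),
    ExpT Adm p (stationary Adm f hf) x z ≤ ENNReal.ofReal M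

/-- `B_g(x) = {a ∈ A(x) : g(x) = max{g(y) : p_{xy}(a) > 0}}`. -/
def Bg (g : S → ℝ) (x : S) : Set A :=
  {a | a ∈ Adm x ∧ g x = sSup (g '' {y | 0 < p x a y})}

/-- The family `𝒢` of functions characterizing `J*(λ,·)`. -/
def Gclass : Set (S → ℝ) :=
  {g | (∀ x, g x = sInf ((fun a => sSup (g '' {y | 0 < p x a y})) '' (Adm x : Set A))) ∧
    ∃ h : S → ℝ, ∀ x,
      sInf ((fun a => Real.exp (lam * C x a) * ∑ y, p x a y * Real.exp (lam * h y)) ''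
        Bg Adm p g x) ≤ Real.exp (lam * g x + lam * h x)}

/-- The class `𝒫*` of policies which always select actions in `B*(X_t)`. -/
def Pstar : Set (Policy S A Adm) :=
  {π | ∀ (x : S) (t : ℕ),
    cylProb Adm p π x (t + 1)
      (fun v => (v (Fin.last t)).1 ∈
        Bg Adm p (Jopt Adm p C lam) (stateAt x (List.ofFn v) t)) = 1}

/-- The deviation function
`h(x) = inf_{π ∈ 𝒫*} (1/λ) log E_x^π[exp(λα Σ_{t<T}(C(X_t,A_t) − J*(λ,X_t)))]`. -/
noncomputable def hdev (z : S) (α : ℝ) (x : S) : EReal :=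
  ⨅ π ∈ Pstar Adm p C lam, ((lam⁻¹ : ℝ) : EReal) *
    ENNReal.log (EhitExp Adm p π x z
      (fun s a => lam * α * (C s a - Jopt Adm p C lam s)))

/-- `ψ(ε) = (1/λ) inf_{δ∈𝒫*} log E_z^δ[exp(λ Σ_{t<T}(C(X_t,A_t) − γ₀ − 2ε))]`. -/
noncomputable def psi (z : S) (ε : ℝ) : EReal :=
  ((lam⁻¹ : ℝ) : EReal) * ⨅ π ∈ Pstar Adm p C lam,
    ENNReal.log (EhitExp Adm p π z z
      (fun s a => lam * (C s a - Jopt Adm p C lam z - 2 * ε)))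

/-- `ξ₀ = −(1−α) log β / (λα)`. -/
noncomputable def xi0 (α β : ℝ) : ℝ := -((1 - α) * Real.log β) / (lam * α)

/-- `ξ₁`: 1 if `J*(λ,·)` is constant, otherwise the minimum gap between distinct
values of `J*(λ,·)`. -/
noncomputable def xi1 : ℝ :=
  if ∀ u v : S, Jopt Adm p C lam u = Jopt Adm p C lam v then 1
  else sInf {d | ∃ u v : S, Jopt Adm p C lam u < Jopt Adm p C lam v ∧
    d = Jopt Adm p C lam v - Jopt Adm p C lam u}

/-- `ξ = min{ξ₀, ξ₁}`. -/
noncomputable def xi (α β : ℝ) : ℝ := min (xi0 lam α β) (xi1 Adm p C lam)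

/-- The shifted policy obtained by prefixing the fixed history `pre`. -/
def shiftPolicy (π : Policy S A Adm) (pre : List (S × A)) : Policy S A Adm where
  toFun := fun h s a => π.toFun (pre ++ h) s a
  nonneg := fun h s a => π.nonneg _ s a
  sum_one := fun h s => π.sum_one _ s
  supp := fun h s a ha => π.supp _ s a ha

/-- The history (list of (state, action) pairs) along the trajectory `l` started at `x`. -/
def histOf : S → List (A × S) → List (S × A)
  | _, [] => []
  | x, (a, y) :: rest => (x, a) :: histOf y rest


/-! ### Auxiliary lemmas for Statement 7 -/

section Aux

/-- Uniform bound on the one-step cost. -/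
noncomputable def cB : ℝ := ∑ x : S, ∑ a : A, |C x a|

lemma cB_nonneg : 0 ≤ cB C :=
  Finset.sum_nonneg fun _ _ => Finset.sum_nonneg fun _ _ => abs_nonneg _

lemma abs_C_le (x : S) (a : A) : |C x a| ≤ cB C := by
  have h1 : |C x a| ≤ ∑ b : A, |C x b| :=
    Finset.single_le_sum (f := fun b => |C x b|) (fun _ _ => abs_nonneg _)
      (Finset.mem_univ a)
  refine h1.trans ?_
  exact Finset.single_le_sum (f := fun x' => ∑ b : A, |C x' b|)
    (fun _ _ => Finset.sum_nonneg fun _ _ => abs_nonneg _) (Finset.mem_univ x)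

lemma abs_costSum_le : ∀ (l : List (A × S)) (x : S),
    |costSum C x l| ≤ l.length * cB C := by
  intro l
  induction l with
  | nil => intro x; simp [costSum]
  | cons q rest ih =>
      intro x
      obtain ⟨a, y⟩ := q
      have h1 := abs_C_le C x a
      have h2 := ih y
      calc |costSum C x ((a, y) :: rest)| = |C x a + costSum C y rest| := rfl
        _ ≤ |C x a| + |costSum C y rest| := abs_add_le _ _
        _ ≤ cB C + rest.length * cB C := add_le_add h1 h2
        _ = ((a, y) :: rest).length * cB C := by
            simp [List.length_cons]; ring

lemma costSum_le (l : List (A × S)) (x : S) : costSum C x l ≤ l.length * cB C :=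
  (le_abs_self _).trans (abs_costSum_le C l x)

lemma neg_costSum_le (l : List (A × S)) (x : S) : -(l.length * cB C) ≤ costSum C x l := by
  have h1 := abs_costSum_le C l x
  have h2 := neg_abs_le (costSum C x l)
  linarith

variable {p} in
lemma step_nonneg (hp : ∀ (x : S), ∀ a ∈ Adm x, (∀ y, 0 ≤ p x a y) ∧ (∑ y, p x a y) = 1)
    (π : Policy S A Adm) (h : List (S × A)) (x : S) (a : A) (y : S) :
    0 ≤ π.toFun h x a * p x a y := by
  by_cases hz : π.toFun h x a = 0
  · simp [hz]
  · have ha : a ∈ Adm x := by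
      by_contra hna; exact hz (π.supp h x a hna)
    exact mul_nonneg (π.nonneg h x a) ((hp x a ha).1 y)

variable {p} in
lemma pathProbAux_nonneg
    (hp : ∀ (x : S), ∀ a ∈ Adm x, (∀ y, 0 ≤ p x a y) ∧ (∑ y, p x a y) = 1)
    (π : Policy S A Adm) :
    ∀ (l : List (A × S)) (h : List (S × A)) (x : S), 0 ≤ pathProbAux Adm p π h x l := by
  intro l
  induction l with
  | nil => intro h x; simp [pathProbAux]
  | cons q rest ih =>
      intro h x
      obtain ⟨a, y⟩ := q
      show 0 ≤ π.toFun h x a * p x a y * pathProbAux Adm p π (h ++ [(x, a)]) y rest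
      exact mul_nonneg (step_nonneg Adm hp π h x a y) (ih _ _)

/-- Sum decomposition for sums over `Fin (n+1) → β`. -/
lemma sum_fin_succ_fun {β : Type*} [Fintype β] (n : ℕ) (F : (Fin (n + 1) → β) → ℝ) :
    ∑ v : Fin (n + 1) → β, F v = ∑ q : β, ∑ u : Fin n → β, F (Fin.cons q u) := by
  rw [← (Fin.consEquiv (fun _ : Fin (n + 1) => β)).sum_comp F, Fintype.sum_prod_type]
  rfl

lemma ofFn_cons {β : Type*} (n : ℕ) (q : β) (u : Fin n → β) :
    List.ofFn (Fin.cons q u : Fin (n + 1) → β) = q :: List.ofFn u := by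
  rw [List.ofFn_succ]
  simp [Fin.cons_zero, Fin.cons_succ]

variable {p} in
lemma sum_pathProbAux
    (hp : ∀ (x : S), ∀ a ∈ Adm x, (∀ y, 0 ≤ p x a y) ∧ (∑ y, p x a y) = 1)
    (π : Policy S A Adm) :
    ∀ (n : ℕ) (h : List (S × A)) (x : S),
      ∑ v : Fin n → A × S, pathProbAux Adm p π h x (List.ofFn v) = 1 := by
  intro n
  induction n with
  | zero => intro h x; simp [pathProbAux]
  | succ n ih =>
      intro h x
      rw [sum_fin_succ_fun]
      have hterm : ∀ q : A × S, ∑ u : Fin n → A × S,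
          pathProbAux Adm p π h x (List.ofFn (Fin.cons q u)) =
          π.toFun h x q.1 * p x q.1 q.2 := by
        intro q
        obtain ⟨a, y⟩ := q
        have : ∀ u : Fin n → A × S,
            pathProbAux Adm p π h x (List.ofFn (Fin.cons (a, y) u)) =
            π.toFun h x a * p x a y * pathProbAux Adm p π (h ++ [(x, a)]) y (List.ofFn u) := by
          intro u; rw [ofFn_cons]; rfl
        rw [Finset.sum_congr rfl fun u _ => this u, ← Finset.mul_sum, ih, mul_one]
      rw [Finset.sum_congr rfl fun q _ => hterm q, Fintype.sum_prod_type]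
      have : ∀ a : A, ∑ y : S, π.toFun h x a * p x a y = π.toFun h x a := by
        intro a
        by_cases ha : a ∈ Adm x
        · rw [← Finset.mul_sum, (hp x a ha).2, mul_one]
        · simp [π.supp h x a ha]
      rw [Finset.sum_congr rfl fun a _ => this a, π.sum_one]

lemma pathProbAux_append (π : Policy S A Adm) :
    ∀ (l₁ : List (A × S)) (h : List (S × A)) (x : S) (l₂ : List (A × S)),
      pathProbAux Adm p π h x (l₁ ++ l₂) =
        pathProbAux Adm p π h x l₁ *
          pathProbAux Adm p π (h ++ histOf x l₁) (lastState x l₁) l₂ := by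
  intro l₁
  induction l₁ with
  | nil => intro h x l₂; simp [pathProbAux, histOf, lastState]
  | cons q rest ih =>
      intro h x l₂
      obtain ⟨a, y⟩ := q
      show π.toFun h x a * p x a y * pathProbAux Adm p π (h ++ [(x, a)]) y (rest ++ l₂) = _
      rw [ih]
      have h1 : lastState x ((a, y) :: rest) = lastState y rest := rfl
      have h2 : histOf x ((a, y) :: rest) = (x, a) :: histOf y rest := rfl
      rw [h1, h2, List.append_cons h (x, a) (histOf y rest)]
      show _ = π.toFun h x a * p x a y * pathProbAux Adm p π (h ++ [(x, a)]) y rest *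
        pathProbAux Adm p π (h ++ [(x, a)] ++ histOf y rest) (lastState y rest) l₂
      ring

lemma costSum_append :
    ∀ (l₁ : List (A × S)) (x : S) (l₂ : List (A × S)),
      costSum C x (l₁ ++ l₂) = costSum C x l₁ + costSum C (lastState x l₁) l₂ := by
  intro l₁
  induction l₁ with
  | nil => intro x l₂; simp [costSum, lastState]
  | cons q rest ih =>
      intro x l₂
      obtain ⟨a, y⟩ := q
      show C x a + costSum C y (rest ++ l₂) = _
      rw [ih]
      have h1 : lastState x ((a, y) :: rest) = lastState y rest := rfl
      rw [h1]
      show _ = C x a + costSum C y rest + costSum C (lastState y rest) l₂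
      ring

lemma lastState_append (x : S) (l₁ l₂ : List (A × S)) :
    lastState x (l₁ ++ l₂) = lastState (lastState x l₁) l₂ :=
  List.foldl_append

lemma pathProbAux_shift (π : Policy S A Adm) (pre : List (S × A)) :
    ∀ (l : List (A × S)) (h : List (S × A)) (x : S),
      pathProbAux Adm p (shiftPolicy Adm π pre) h x l = pathProbAux Adm p π (pre ++ h) x l := by
  intro l
  induction l with
  | nil => intro h x; rfl
  | cons q rest ih =>
      intro h x
      obtain ⟨a, y⟩ := q
      show (shiftPolicy Adm π pre).toFun h x a * p x a y *
          pathProbAux Adm p (shiftPolicy Adm π pre) (h ++ [(x, a)]) y rest = _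
      rw [ih]
      show π.toFun (pre ++ h) x a * p x a y *
          pathProbAux Adm p π (pre ++ (h ++ [(x, a)])) y rest = _
      rw [← List.append_assoc]
      rfl

/-- The expectation appearing inside `Jn`. -/
noncomputable def Zval (π : Policy S A Adm) (x : S) (n : ℕ) : ℝ :=
  ∑ v : Fin n → A × S,
    pathProb Adm p π x (List.ofFn v) * Real.exp (lam * costSum C x (List.ofFn v))

lemma Jn_eq_Zval (π : Policy S A Adm) (x : S) (n : ℕ) :
    Jn Adm p C lam π x n = (1 / lam) * Real.log (Zval Adm p C lam π x n) := rfl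

variable {p lam} in
lemma Zval_bounds
    (hp : ∀ (x : S), ∀ a ∈ Adm x, (∀ y, 0 ≤ p x a y) ∧ (∑ y, p x a y) = 1)
    (hlam : 0 < lam) (π : Policy S A Adm) (x : S) (n : ℕ) :
    Real.exp (-(lam * (n * cB C))) ≤ Zval Adm p C lam π x n ∧
      Zval Adm p C lam π x n ≤ Real.exp (lam * (n * cB C)) := by
  have hsum : ∑ v : Fin n → A × S, pathProb Adm p π x (List.ofFn v) = 1 :=
    sum_pathProbAux Adm hp π n [] x
  have hnn : ∀ v : Fin n → A × S, 0 ≤ pathProb Adm p π x (List.ofFn v) :=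
    fun v => pathProbAux_nonneg Adm hp π _ _ _
  have hlen : ∀ v : Fin n → A × S, (List.ofFn v).length = n := fun v => List.length_ofFn
  constructor
  · calc Real.exp (-(lam * (n * cB C)))
        = ∑ v : Fin n → A × S,
            pathProb Adm p π x (List.ofFn v) * Real.exp (-(lam * (n * cB C))) := by
          rw [← Finset.sum_mul, hsum, one_mul]
      _ ≤ Zval Adm p C lam π x n := by
          apply Finset.sum_le_sum
          intro v _
          apply mul_le_mul_of_nonneg_left _ (hnn v)
          apply Real.exp_le_exp.2
          have := neg_costSum_le C (List.ofFn v) x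
          rw [hlen v] at this
          nlinarith [this]
  · calc Zval Adm p C lam π x n
        ≤ ∑ v : Fin n → A × S,
            pathProb Adm p π x (List.ofFn v) * Real.exp (lam * (n * cB C)) := by
          apply Finset.sum_le_sum
          intro v _
          apply mul_le_mul_of_nonneg_left _ (hnn v)
          apply Real.exp_le_exp.2
          have := costSum_le C (List.ofFn v) x
          rw [hlen v] at this
          nlinarith [this]
      _ = Real.exp (lam * (n * cB C)) := by rw [← Finset.sum_mul, hsum, one_mul]

variable {p lam} in
lemma Zval_pos
    (hp : ∀ (x : S), ∀ a ∈ Adm x, (∀ y, 0 ≤ p x a y) ∧ (∑ y, p x a y) = 1)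
    (hlam : 0 < lam) (π : Policy S A Adm) (x : S) (n : ℕ) :
    0 < Zval Adm p C lam π x n :=
  lt_of_lt_of_le (Real.exp_pos _) (Zval_bounds Adm C hp hlam π x n).1

variable {p lam} in
lemma Jn_bounds
    (hp : ∀ (x : S), ∀ a ∈ Adm x, (∀ y, 0 ≤ p x a y) ∧ (∑ y, p x a y) = 1)
    (hlam : 0 < lam) (π : Policy S A Adm) (x : S) (n : ℕ) :
    -(n * cB C) ≤ Jn Adm p C lam π x n ∧ Jn Adm p C lam π x n ≤ n * cB C := by
  obtain ⟨h1, h2⟩ := Zval_bounds Adm C hp hlam π x n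
  have hpos := Zval_pos Adm C hp hlam π x n
  have hlog1 : -(lam * (n * cB C)) ≤ Real.log (Zval Adm p C lam π x n) :=
    (Real.le_log_iff_exp_le hpos).2 h1
  have hlog2 : Real.log (Zval Adm p C lam π x n) ≤ lam * (n * cB C) :=
    (Real.log_le_iff_le_exp hpos).2 h2
  rw [Jn_eq_Zval]
  constructor
  · rw [neg_le, ← mul_neg]
    calc (1 / lam) * -Real.log (Zval Adm p C lam π x n)
        ≤ (1 / lam) * (lam * (n * cB C)) := by
          apply mul_le_mul_of_nonneg_left _ (le_of_lt (one_div_pos.2 hlam))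
          linarith
      _ = n * cB C := by field_simp
  · calc (1 / lam) * Real.log (Zval Adm p C lam π x n)
        ≤ (1 / lam) * (lam * (n * cB C)) :=
          mul_le_mul_of_nonneg_left hlog2 (le_of_lt (one_div_pos.2 hlam))
      _ = n * cB C := by field_simp

variable {p lam} in
lemma Jdiv_bounds
    (hp : ∀ (x : S), ∀ a ∈ Adm x, (∀ y, 0 ≤ p x a y) ∧ (∑ y, p x a y) = 1)
    (hlam : 0 < lam) (π : Policy S A Adm) (x : S) (n : ℕ) :
    -(cB C) ≤ Jn Adm p C lam π x n / n ∧ Jn Adm p C lam π x n / n ≤ cB C := by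
  cases n with
  | zero =>
      simp only [Nat.cast_zero, div_zero]
      constructor
      · linarith [cB_nonneg C]
      · exact cB_nonneg C
  | succ n =>
      obtain ⟨h1, h2⟩ := Jn_bounds Adm C hp hlam π x (n + 1)
      have hnpos : (0 : ℝ) < ((n + 1 : ℕ) : ℝ) := by exact_mod_cast Nat.succ_pos n
      constructor
      · rw [le_div_iff₀ hnpos]
        nlinarith [h1]
      · rw [div_le_iff₀ hnpos]
        nlinarith [h2]

/-- Key conditionally-complete-lattice limsup comparison in `ℝ`. -/
lemma limsup_le_limsup_shift (u v : ℕ → ℝ) (k : ℕ) (B : ℝ)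
    (hu : ∀ n, -B ≤ u n) (hv : ∀ n, v n ≤ B)
    (h : ∀ ε : ℝ, 0 < ε → ∀ᶠ n in Filter.atTop, u n ≤ v (n + k) + ε) :
    Filter.limsup u Filter.atTop ≤ Filter.limsup v Filter.atTop := by
  apply le_of_forall_pos_le_add
  intro ε hε
  rw [Filter.limsup_eq, Filter.limsup_eq]
  set Su := {a : ℝ | ∀ᶠ n in Filter.atTop, u n ≤ a} with hSu
  set Tv := {a : ℝ | ∀ᶠ n in Filter.atTop, v n ≤ a} with hTv
  have hTne : Tv.Nonempty := ⟨B, Filter.Eventually.of_forall hv⟩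
  have hSlb : ∀ a ∈ Su, -B ≤ a := by
    intro a ha
    obtain ⟨n, hn⟩ := ha.exists
    exact (hu n).trans hn
  have key : ∀ a ∈ Tv, sInf Su ≤ a + ε := by
    intro a ha
    have ha' : ∀ᶠ n in Filter.atTop, v (n + k) ≤ a :=
      (Filter.tendsto_add_atTop_nat k).eventually ha
    have hmem : a + ε ∈ Su := by
      filter_upwards [h ε hε, ha'] with n h1 h2
      linarith
    exact csInf_le ⟨-B, hSlb⟩ hmem
  have : sInf Su - ε ≤ sInf Tv :=
    le_csInf hTne fun a ha => by linarith [key a ha]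
  linarith

variable {p lam} in
lemma neg_cB_le_Javg
    (hp : ∀ (x : S), ∀ a ∈ Adm x, (∀ y, 0 ≤ p x a y) ∧ (∑ y, p x a y) = 1)
    (hlam : 0 < lam) (π : Policy S A Adm) (x : S) :
    -(cB C) ≤ Javg Adm p C lam π x := by
  have := limsup_le_limsup_shift (fun _ => -(cB C))
    (fun n => Jn Adm p C lam π x n / n) 0 (cB C)
    (fun n => le_refl _)
    (fun n => (Jdiv_bounds Adm C hp hlam π x n).2)
    (fun ε hε => Filter.Eventually.of_forall fun n => by
      have := (Jdiv_bounds Adm C hp hlam π x (n + 0)).1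
      linarith)
  rwa [Filter.limsup_const] at this

variable {p lam} in
lemma bddBelow_Javg
    (hp : ∀ (x : S), ∀ a ∈ Adm x, (∀ y, 0 ≤ p x a y) ∧ (∑ y, p x a y) = 1)
    (hlam : 0 < lam) (x : S) :
    BddBelow (Set.range fun π : Policy S A Adm => Javg Adm p C lam π x) := by
  refine ⟨-(cB C), ?_⟩
  rintro r ⟨π, rfl⟩
  exact neg_cB_le_Javg Adm C hp hlam π x

variable {p} in
/-- Under the Doeblin condition, from every state and under every policy there is a
positive-probability finite path ending at `z`. -/
lemma exists_path_to_z
    (hA : ∀ x, (Adm x).Nonempty)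
    (hp : ∀ (x : S), ∀ a ∈ Adm x, (∀ y, 0 ≤ p x a y) ∧ (∑ y, p x a y) = 1)
    (z : S) (M : ℝ) (hDoe : Doeblin Adm p z M)
    (π : Policy S A Adm) (y : S) :
    ∃ w : List (A × S), 0 < pathProb Adm p π y w ∧ lastState y w = z := by
  by_contra H
  push_neg at H
  -- `R s` : `s` is reachable from `y` with positive probability under `π`.
  set R : S → Prop := fun s => ∃ w, 0 < pathProb Adm p π y w ∧ lastState y w = s with hR
  have hyR : R y := ⟨[], by norm_num [pathProb, pathProbAux], rfl⟩
  have hzR : ¬ R z := by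
    rintro ⟨w, hw1, hw2⟩
    exact H w hw1 hw2
  -- from each reachable state choose a supported admissible action whose successors
  -- are again reachable
  have key : ∀ s, R s → ∃ a, a ∈ Adm s ∧ ∀ y', 0 < p s a y' → R y' := by
    rintro s ⟨w, hw, hlast⟩
    have hsum := π.sum_one (histOf y w) s
    have hex : ∃ a, 0 < π.toFun (histOf y w) s a := by
      by_contra hno
      push_neg at hno
      have : ∑ a : A, π.toFun (histOf y w) s a = 0 :=
        Finset.sum_eq_zero fun a _ => le_antisymm (hno a) (π.nonneg _ _ _)
      rw [this] at hsum
      norm_num at hsum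
    obtain ⟨a, ha⟩ := hex
    have haAdm : a ∈ Adm s := by
      by_contra hna
      rw [π.supp _ _ _ hna] at ha
      exact lt_irrefl 0 ha
    refine ⟨a, haAdm, fun y' hpy' => ?_⟩
    refine ⟨w ++ [(a, y')], ?_, ?_⟩
    · rw [pathProb, pathProbAux_append]
      rw [List.nil_append]
      have : pathProbAux Adm p π (histOf y w) (lastState y w) [(a, y')] =
          π.toFun (histOf y w) (lastState y w) a * p (lastState y w) a y' * 1 := rfl
      rw [this, hlast, mul_one]
      exact mul_pos hw (mul_pos ha hpy')
    · rw [lastState_append, hlast]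
      rfl
  -- build a stationary policy staying inside `R`
  have fchoice : ∀ s, ∃ a, a ∈ Adm s ∧ (R s → ∀ y', 0 < p s a y' → R y') := by
    intro s
    by_cases hs : R s
    · obtain ⟨a, h1, h2⟩ := key s hs
      exact ⟨a, h1, fun _ => h2⟩
    · exact ⟨(hA s).choose, (hA s).choose_spec, fun h => absurd h hs⟩
  choose f hf1 hf2 using fchoice
  -- invariance: all states visited under `stationary f` from a reachable state are reachable
  have inv : ∀ (l : List (A × S)) (h : List (S × A)) (s : S), R s →
      pathProbAux Adm p (stationary Adm f hf1) h s l ≠ 0 → ∀ q ∈ l, R q.2 := by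
    intro l
    induction l with
    | nil => intro h s _ _ q hq; simp at hq
    | cons q0 rest ih =>
        intro h s hs hne q hq
        obtain ⟨a, y'⟩ := q0
        have hsplit : pathProbAux Adm p (stationary Adm f hf1) h s ((a, y') :: rest) =
            (stationary Adm f hf1).toFun h s a * p s a y' *
              pathProbAux Adm p (stationary Adm f hf1) (h ++ [(s, a)]) y' rest := rfl
        rw [hsplit] at hne
        have hπ : (stationary Adm f hf1).toFun h s a ≠ 0 :=
          fun h0 => hne (by rw [h0]; ring)
        have hap : a = f s := by
          by_contra hcon
          exact hπ (by simp [stationary, hcon])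
        have hpne : p s a y' ≠ 0 := fun h0 => hne (by rw [h0]; ring)
        have hppos : 0 < p s a y' := by
          rcases lt_or_eq_of_le ((hp s a (hap ▸ hf1 s)).1 y') with h' | h'
          · exact h'
          · exact absurd h'.symm hpne
        have hy'R : R y' := hf2 s hs y' (hap ▸ hppos)
        rcases List.mem_cons.1 hq with rfl | hq'
        · exact hy'R
        · exact ih (h ++ [(s, a)]) y' hy'R (fun h0 => hne (by rw [h0]; ring)) q hq'
  -- hence survival probability is 1 at every horizon
  have hsurv : ∀ n : ℕ, cylProb Adm p (stationary Adm f hf1) y n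
      (fun v => ∀ t : Fin n, (v t).2 ≠ z) = 1 := by
    intro n
    rw [cylProb]
    have : ∀ v : Fin n → A × S,
        (@ite ℝ (∀ t : Fin n, (v t).2 ≠ z)
          (Classical.propDecidable _)
          (pathProb Adm p (stationary Adm f hf1) y (List.ofFn v)) 0) =
        pathProb Adm p (stationary Adm f hf1) y (List.ofFn v) := by
      intro v
      by_cases h0 : pathProb Adm p (stationary Adm f hf1) y (List.ofFn v) = 0
      · rw [h0]; simp
      · rw [if_pos]
        intro t ht
        have hmem : v t ∈ List.ofFn v := (List.mem_ofFn).2 ⟨t, rfl⟩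
        have := inv (List.ofFn v) [] y hyR h0 (v t) hmem
        rw [ht] at this
        exact hzR this
    exact (Finset.sum_congr rfl fun v _ => this v).trans
      (sum_pathProbAux Adm hp (stationary Adm f hf1) n [] y)
  -- so the expected hitting time is infinite, contradicting Doeblin
  have hExpT : ExpT Adm p (stationary Adm f hf1) y z = ⊤ := by
    rw [ExpT]
    have : ∀ n : ℕ, ENNReal.ofReal
        (cylProb Adm p (stationary Adm f hf1) y n
          (fun v => ∀ t : Fin n, (v t).2 ≠ z)) = 1 := by
      intro n; rw [hsurv n, ENNReal.ofReal_one]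
    rw [tsum_congr this]
    exact ENNReal.tsum_const_eq_top_of_ne_zero one_ne_zero
  have := hDoe.2 y f hf1
  rw [hExpT, top_le_iff] at this
  exact ENNReal.ofReal_ne_top this

variable {p lam} in
/-- The splicing inequality: concatenating a fixed prefix path lower bounds the
full-horizon expectation. -/
lemma Zval_splice
    (hp : ∀ (x : S), ∀ a ∈ Adm x, (∀ y, 0 ≤ p x a y) ∧ (∑ y, p x a y) = 1)
    (hlam : 0 < lam) (π : Policy S A Adm) :
    ∀ (w : List (A × S)) (h : List (S × A)) (x : S) (n : ℕ),
      pathProbAux Adm p π h x w * Real.exp (lam * costSum C x w) *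
        (∑ u : Fin n → A × S,
          pathProbAux Adm p π (h ++ histOf x w) (lastState x w) (List.ofFn u) *
            Real.exp (lam * costSum C (lastState x w) (List.ofFn u))) ≤
      ∑ v : Fin (n + w.length) → A × S,
        pathProbAux Adm p π h x (List.ofFn v) *
          Real.exp (lam * costSum C x (List.ofFn v)) := by
  intro w
  induction w with
  | nil =>
      intro h x n
      simp only [pathProbAux, List.length_nil, Nat.add_zero]
      have h1 : histOf x ([] : List (A × S)) = [] := rfl
      have h2 : lastState x ([] : List (A × S)) = x := rfl
      have h3 : costSum C x ([] : List (A × S)) = 0 := rfl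
      rw [h1, h2, h3, List.append_nil, mul_zero, Real.exp_zero, one_mul, one_mul]
  | cons q w' ih =>
      intro h x n
      obtain ⟨a, y₀⟩ := q
      -- decompose the right-hand sum at the first step
      have hRHS : ∑ v : Fin (n + ((a, y₀) :: w').length) → A × S,
          pathProbAux Adm p π h x (List.ofFn v) *
            Real.exp (lam * costSum C x (List.ofFn v)) =
          ∑ q0 : A × S, ∑ u : Fin (n + w'.length) → A × S,
            π.toFun h x q0.1 * p x q0.1 q0.2 *
              pathProbAux Adm p π (h ++ [(x, q0.1)]) q0.2 (List.ofFn u) *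
              (Real.exp (lam * C x q0.1) *
                Real.exp (lam * costSum C q0.2 (List.ofFn u))) := by
        rw [show (n + ((a, y₀) :: w').length) = (n + w'.length) + 1 by
          simp only [List.length_cons]; omega]
        rw [sum_fin_succ_fun]
        apply Finset.sum_congr rfl
        intro q0 _
        apply Finset.sum_congr rfl
        intro u _
        rw [ofFn_cons]
        obtain ⟨b, y⟩ := q0
        show pathProbAux Adm p π h x ((b, y) :: List.ofFn u) *
            Real.exp (lam * costSum C x ((b, y) :: List.ofFn u)) = _
        have e1 : pathProbAux Adm p π h x ((b, y) :: List.ofFn u) =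
            π.toFun h x b * p x b y * pathProbAux Adm p π (h ++ [(x, b)]) y (List.ofFn u) := rfl
        have e2 : costSum C x ((b, y) :: List.ofFn u) =
            C x b + costSum C y (List.ofFn u) := rfl
        rw [e1, e2, mul_add, Real.exp_add]
      rw [hRHS]
      -- keep only the term `q0 = (a, y₀)`
      have hnn : ∀ q0 : A × S, 0 ≤ ∑ u : Fin (n + w'.length) → A × S,
          π.toFun h x q0.1 * p x q0.1 q0.2 *
            pathProbAux Adm p π (h ++ [(x, q0.1)]) q0.2 (List.ofFn u) *
            (Real.exp (lam * C x q0.1) *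
              Real.exp (lam * costSum C q0.2 (List.ofFn u))) := by
        intro q0
        apply Finset.sum_nonneg
        intro u _
        apply mul_nonneg
        apply mul_nonneg (step_nonneg Adm hp π h x q0.1 q0.2)
        exact pathProbAux_nonneg Adm hp π _ _ _
        positivity
      have hsingle := Finset.single_le_sum (f := fun q0 : A × S =>
          ∑ u : Fin (n + w'.length) → A × S,
            π.toFun h x q0.1 * p x q0.1 q0.2 *
              pathProbAux Adm p π (h ++ [(x, q0.1)]) q0.2 (List.ofFn u) *
              (Real.exp (lam * C x q0.1) *
                Real.exp (lam * costSum C q0.2 (List.ofFn u))))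
        (fun q0 _ => hnn q0) (Finset.mem_univ (a, y₀))
      refine le_trans ?_ hsingle
      -- now use the induction hypothesis
      have hfac : (0 : ℝ) ≤ π.toFun h x a * p x a y₀ * Real.exp (lam * C x a) :=
        mul_nonneg (step_nonneg Adm hp π h x a y₀) (le_of_lt (Real.exp_pos _))
      have hIH := ih (h ++ [(x, a)]) y₀ n
      calc pathProbAux Adm p π h x ((a, y₀) :: w') *
            Real.exp (lam * costSum C x ((a, y₀) :: w')) *
            (∑ u : Fin n → A × S,
              pathProbAux Adm p π (h ++ histOf x ((a, y₀) :: w'))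
                  (lastState x ((a, y₀) :: w')) (List.ofFn u) *
                Real.exp (lam * costSum C (lastState x ((a, y₀) :: w')) (List.ofFn u)))
          = π.toFun h x a * p x a y₀ * Real.exp (lam * C x a) *
            (pathProbAux Adm p π (h ++ [(x, a)]) y₀ w' *
              Real.exp (lam * costSum C y₀ w') *
              (∑ u : Fin n → A × S,
                pathProbAux Adm p π ((h ++ [(x, a)]) ++ histOf y₀ w')
                    (lastState y₀ w') (List.ofFn u) *
                  Real.exp (lam * costSum C (lastState y₀ w') (List.ofFn u)))) := by
            have e1 : pathProbAux Adm p π h x ((a, y₀) :: w') =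
                π.toFun h x a * p x a y₀ *
                  pathProbAux Adm p π (h ++ [(x, a)]) y₀ w' := rfl
            have e2 : costSum C x ((a, y₀) :: w') = C x a + costSum C y₀ w' := rfl
            have e3 : lastState x ((a, y₀) :: w') = lastState y₀ w' := rfl
            have e4 : histOf x ((a, y₀) :: w') = (x, a) :: histOf y₀ w' := rfl
            rw [e1, e2, e3, e4, List.append_cons h (x, a) (histOf y₀ w'), mul_add,
              Real.exp_add]
            ring
        _ ≤ π.toFun h x a * p x a y₀ * Real.exp (lam * C x a) *
            (∑ u : Fin (n + w'.length) → A × S,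
              pathProbAux Adm p π (h ++ [(x, a)]) y₀ (List.ofFn u) *
                Real.exp (lam * costSum C y₀ (List.ofFn u))) :=
            mul_le_mul_of_nonneg_left hIH hfac
        _ = ∑ u : Fin (n + w'.length) → A × S,
              π.toFun h x a * p x a y₀ *
                pathProbAux Adm p π (h ++ [(x, a)]) y₀ (List.ofFn u) *
                (Real.exp (lam * C x a) *
                  Real.exp (lam * costSum C y₀ (List.ofFn u))) := by
            rw [Finset.mul_sum]
            apply Finset.sum_congr rfl
            intro u _
            ring

variable {p lam} in
lemma Jopt_z_le_Javg
    (hA : ∀ x, (Adm x).Nonempty)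
    (hp : ∀ (x : S), ∀ a ∈ Adm x, (∀ y, 0 ≤ p x a y) ∧ (∑ y, p x a y) = 1)
    (hlam : 0 < lam)
    (z : S) (M : ℝ) (hDoe : Doeblin Adm p z M)
    (π : Policy S A Adm) (y : S) :
    Jopt Adm p C lam z ≤ Javg Adm p C lam π y := by
  obtain ⟨w, hwpos, hwlast⟩ := exists_path_to_z Adm hA hp z M hDoe π y
  set σ := shiftPolicy Adm π (histOf y w) with hσ
  set k := w.length with hk
  set K : ℝ := (1 / lam) * Real.log (pathProb Adm p π y w) + costSum C y w with hK
  have h1lam : 0 < 1 / lam := one_div_pos.2 hlam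
  -- step inequality from the splicing bound
  have hstep : ∀ n : ℕ, K + Jn Adm p C lam σ z n ≤ Jn Adm p C lam π y (n + k) := by
    intro n
    have hsplice := Zval_splice Adm C hp hlam π w [] y n
    have hinner : ∀ u : Fin n → A × S,
        pathProbAux Adm p π ([] ++ histOf y w) (lastState y w) (List.ofFn u) *
          Real.exp (lam * costSum C (lastState y w) (List.ofFn u)) =
        pathProb Adm p σ z (List.ofFn u) *
          Real.exp (lam * costSum C z (List.ofFn u)) := by
      intro u
      have hσeq : pathProb Adm p σ z (List.ofFn u) =
          pathProbAux Adm p π (histOf y w) z (List.ofFn u) := by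
        rw [pathProb, hσ, pathProbAux_shift, List.append_nil]
      rw [List.nil_append, hwlast, hσeq]
    have hsum_eq : (∑ u : Fin n → A × S,
        pathProbAux Adm p π ([] ++ histOf y w) (lastState y w) (List.ofFn u) *
          Real.exp (lam * costSum C (lastState y w) (List.ofFn u))) =
        Zval Adm p C lam σ z n := by
      rw [Zval]
      exact Finset.sum_congr rfl fun u _ => hinner u
    rw [hsum_eq] at hsplice
    have hle : pathProb Adm p π y w * Real.exp (lam * costSum C y w) *
        Zval Adm p C lam σ z n ≤ Zval Adm p C lam π y (n + k) := hsplice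
    have hZσ : 0 < Zval Adm p C lam σ z n := Zval_pos Adm C hp hlam σ z n
    have hZπ : 0 < Zval Adm p C lam π y (n + k) := Zval_pos Adm C hp hlam π y (n + k)
    have hprod : 0 < pathProb Adm p π y w * Real.exp (lam * costSum C y w) *
        Zval Adm p C lam σ z n := by positivity
    have hlog := Real.log_le_log hprod hle
    rw [Real.log_mul (by positivity) (ne_of_gt hZσ),
      Real.log_mul (ne_of_gt hwpos) (Real.exp_ne_zero _), Real.log_exp] at hlog
    rw [Jn_eq_Zval, Jn_eq_Zval]
    have hc : (1 / lam) * (lam * costSum C y w) = costSum C y w := by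
      field_simp
    have hre : K + (1 / lam) * Real.log (Zval Adm p C lam σ z n) =
        (1 / lam) * (Real.log (pathProb Adm p π y w) + lam * costSum C y w +
          Real.log (Zval Adm p C lam σ z n)) := by
      rw [hK, mul_add, mul_add, hc]
    rw [hre]
    exact mul_le_mul_of_nonneg_left hlog h1lam.le
  -- limsup comparison
  have hJavg : Javg Adm p C lam σ z ≤ Javg Adm p C lam π y := by
    set d : ℝ := k * cB C + |K| with hd
    apply limsup_le_limsup_shift (fun n => Jn Adm p C lam σ z n / n)
      (fun n => Jn Adm p C lam π y n / n) k (cB C)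
      (fun n => (Jdiv_bounds Adm C hp hlam σ z n).1)
      (fun n => (Jdiv_bounds Adm C hp hlam π y n).2)
    intro ε hε
    rw [Filter.eventually_atTop]
    refine ⟨⌈d / ε⌉₊ + 1, fun n hn => ?_⟩
    have hn1 : 1 ≤ n := le_trans (Nat.succ_le_succ (Nat.zero_le _)) hn
    have hNpos : (0 : ℝ) < n := by exact_mod_cast Nat.lt_of_lt_of_le Nat.zero_lt_one hn1
    have hkn : (0 : ℝ) ≤ (k : ℝ) := Nat.cast_nonneg k
    have hNKpos : (0 : ℝ) < (n : ℝ) + k := by linarith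
    have hdn : d ≤ ε * n := by
      have h1 : d / ε ≤ (⌈d / ε⌉₊ : ℝ) := Nat.le_ceil _
      have h2 : (⌈d / ε⌉₊ : ℝ) ≤ n := by
        exact_mod_cast le_trans (Nat.le_succ _) hn
      have h3 := le_trans h1 h2
      rw [div_le_iff₀ hε] at h3
      linarith
    have hstepn := hstep n
    have hσle := (Jn_bounds Adm C hp hlam σ z n).2
    have hKabs : -|K| ≤ K := neg_abs_le K
    set Jσ := Jn Adm p C lam σ z n with hJσ
    set Jπ := Jn Adm p C lam π y (n + k) with hJπ
    have key : Jσ / n ≤ (K + Jσ) / ((n : ℝ) + k) + ε := by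
      rw [div_le_iff₀ hNpos]
      have hexp : ((K + Jσ) / ((n : ℝ) + k) + ε) * n =
          ((K + Jσ) * n + ε * n * ((n : ℝ) + k)) / ((n : ℝ) + k) := by
        field_simp
      rw [hexp, le_div_iff₀ hNKpos]
      have hcb : (k : ℝ) * Jσ ≤ (k : ℝ) * ((n : ℝ) * cB C) :=
        mul_le_mul_of_nonneg_left hσle hkn
      nlinarith [mul_nonneg (mul_nonneg hε.le hNpos.le) hkn,
        mul_le_mul_of_nonneg_left hdn hNpos.le]
    show Jσ / n ≤ Jπ / ((n + k : ℕ) : ℝ) + ε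
    push_cast
    calc Jσ / n ≤ (K + Jσ) / ((n : ℝ) + k) + ε := key
      _ ≤ Jπ / ((n : ℝ) + k) + ε := by
          have h2 : (K + Jσ) / ((n : ℝ) + k) ≤ Jπ / ((n : ℝ) + k) := by
            gcongr
          linarith
  exact le_trans (ciInf_le (bddBelow_Javg Adm C hp hlam z) σ) hJavg

end Aux

/-- under the Doeblin condition, the distinguished state `z` minimizes the
optimal value function. -/
theorem z_minimizes_Jopt
    (hA : ∀ x, (Adm x).Nonempty)
    (hp : ∀ (x : S), ∀ a ∈ Adm x, (∀ y, 0 ≤ p x a y) ∧ (∑ y, p x a y) = 1)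
    (hlam : 0 < lam)
    (z : S) (M : ℝ) (hDoe : Doeblin Adm p z M) :
    Jopt Adm p C lam z = ⨅ y : S, Jopt Adm p C lam y := by
  haveI : Nonempty S := ⟨z⟩
  haveI : Nonempty (Policy S A Adm) :=
    ⟨stationary Adm (fun s => (hA s).choose) (fun s => (hA s).choose_spec)⟩
  apply le_antisymm
  · exact le_ciInf fun y => le_ciInf fun π =>
      Jopt_z_le_Javg Adm C hA hp hlam z M hDoe π y
  · exact ciInf_le (Set.Finite.bddBelow (Set.finite_range _)) z

end RiskSensitive
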